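/- For every odd natural number p ≥ 3 and every integer j with 1 ≤ j ≤ (p−1)/2, the sum Σ_{k=0}^{j} (−1)^k · (p/(p−k)) · C(p−k, k) · C(p−2k, j−k) equals 0, where C(m,n) denotes the binomial coefficient. -/

import Mathlib

open Finset

lemma altU : ∀ (j n : ℕ), j ≤ n →
    ∑ k ∈ Finset.range (j+1), (-1:ℚ)^k * (j.choose k) * ((n-k).choose j) = 1 := by
  intro j
  induction j with
  | zero => intro n _; simp
  | succ j ih =>
    intro n hn
    have ihn := ih (n-1) (by omega)
    set A : ℚ := ∑ k ∈ Finset.range (j+1), (-1:ℚ)^k * (j.choose k) * ((n-k).choose (j+1)) with hA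
    set B : ℚ := ∑ k ∈ Finset.range (j+1), (-1:ℚ)^k * (j.choose k) * ((n-1-k).choose (j+1)) with hB
    set D : ℚ := ∑ m ∈ Finset.range (j+1), (-1:ℚ)^m * (j.choose (m+1)) * ((n-1-m).choose (j+1)) with hD
    have hDA : D = (n.choose (j+1) : ℚ) - A := by
      have hA' : A = (∑ m ∈ Finset.range j, (-1:ℚ)^(m+1) * (j.choose (m+1)) * ((n-(m+1)).choose (j+1)))
          + (-1:ℚ)^0 * (j.choose 0) * ((n-0).choose (j+1)) := by
        rw [hA, Finset.sum_range_succ']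
      have hD' : D = ∑ m ∈ Finset.range j, (-1:ℚ)^m * (j.choose (m+1)) * ((n-1-m).choose (j+1)) := by
        rw [hD, Finset.sum_range_succ, Nat.choose_succ_self]
        simp
      rw [hA', hD']
      have : ∀ m ∈ Finset.range j, (-1:ℚ)^(m+1) * (j.choose (m+1)) * ((n-(m+1)).choose (j+1))
          = -((-1:ℚ)^m * (j.choose (m+1)) * ((n-1-m).choose (j+1))) := by
        intro m _
        have h3 : n - (m+1) = n - 1 - m := by omega
        rw [h3, pow_succ]; ring
      rw [Finset.sum_congr rfl this, Finset.sum_neg_distrib]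
      simp only [Nat.sub_zero, Nat.choose_zero_right, Nat.cast_one, pow_zero, one_mul]
      ring
    have hS : (∑ k ∈ Finset.range (j+1+1), (-1:ℚ)^k * ((j+1).choose k) * ((n-k).choose (j+1)))
        = -B - D + (n.choose (j+1) : ℚ) := by
      rw [Finset.sum_range_succ']
      have : ∀ m ∈ Finset.range (j+1), (-1:ℚ)^(m+1) * ((j+1).choose (m+1)) * ((n-(m+1)).choose (j+1))
          = -((-1:ℚ)^m * (j.choose m) * ((n-1-m).choose (j+1)))
            - ((-1:ℚ)^m * (j.choose (m+1)) * ((n-1-m).choose (j+1))) := by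
        intro m _
        have h1 : n - (m+1) = n - 1 - m := by omega
        rw [h1, Nat.choose_succ_succ, pow_succ]
        push_cast; ring
      rw [Finset.sum_congr rfl this, Finset.sum_sub_distrib, Finset.sum_neg_distrib]
      rw [hB, hD]
      simp only [Nat.sub_zero, Nat.choose_zero_right, Nat.cast_one, pow_zero, one_mul]
    have hAB : A - B = 1 := by
      refine Eq.trans ?_ ihn
      rw [hA, hB, ← Finset.sum_sub_distrib]
      refine Finset.sum_congr rfl fun k hk => ?_
      have hk' : k ≤ j := by simpa [Nat.lt_succ_iff] using hk
      have h1 : n - k = (n-1-k) + 1 := by omega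
      rw [h1, Nat.choose_succ_succ]
      push_cast; ring
    rw [hS, hDA]
    linarith

lemma chooseA (N j k : ℕ) (hk : k ≤ j) :
    N.choose k * (N-k).choose (j-k) = N.choose j * j.choose k := by
  rcases le_or_gt j N with h | h
  · exact (Nat.choose_mul hk).symm
  · have h1 : N.choose j = 0 := Nat.choose_eq_zero_of_lt h
    rcases le_or_gt k N with h2 | h2
    · have : (N-k).choose (j-k) = 0 := Nat.choose_eq_zero_of_lt (by omega)
      simp [h1, this]
    · simp [h1, Nat.choose_eq_zero_of_lt h2]

lemma altT (j n : ℕ) (hj : j ≤ n) :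
    ∑ k ∈ Finset.range (j+1), (-1:ℚ)^k * ((n-k).choose k) * ((n-2*k).choose (j-k)) = 1 := by
  refine Eq.trans ?_ (altU j n hj)
  refine Finset.sum_congr rfl fun k hk => ?_
  have hk' : k ≤ j := by simpa [Nat.lt_succ_iff] using hk
  have h2 : n - 2*k = (n-k) - k := by omega
  have hnat := chooseA (n-k) j k hk'
  have hcast : (((n-k).choose k : ℚ)) * (((n-k-k).choose (j-k) : ℚ)) = ((n-k).choose j : ℚ) * (j.choose k : ℚ) := by
    exact_mod_cast congrArg (Nat.cast : ℕ → ℚ) hnat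
  rw [h2]
  calc (-1:ℚ)^k * ((n-k).choose k) * (((n-k) - k).choose (j-k))
      = (-1:ℚ)^k * (((n-k).choose k) * (((n-k-k)).choose (j-k))) := by ring
    _ = (-1:ℚ)^k * (((n-k).choose j) * (j.choose k)) := by rw [hcast]
    _ = (-1:ℚ)^k * (j.choose k) * ((n-k).choose j) := by ring

theorem sum_vanishes (p : ℕ) (hp : Odd p) (hp3 : 3 ≤ p) (j : ℕ)
    (hj1 : 1 ≤ j) (hj2 : j ≤ (p - 1) / 2) :
    ∑ k ∈ Finset.range (j + 1),
      ((-1 : ℚ) ^ k * ((p : ℚ) / ((p : ℚ) - (k : ℚ))) *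
        (Nat.choose (p - k) k : ℚ) * (Nat.choose (p - 2 * k) (j - k) : ℚ)) = 0 := by
  have hjp : 2 * j ≤ p - 1 := by omega
  have hp0 : (p:ℚ) ≠ 0 := by
    have : 0 < p := by omega
    exact_mod_cast this.ne'
  have term_eq : ∀ k, 1 ≤ k → k ≤ j →
      ((p : ℚ) / ((p : ℚ) - (k : ℚ))) * (Nat.choose (p - k) k : ℚ)
        = (Nat.choose (p - k) k : ℚ) + (Nat.choose (p - k - 1) (k - 1) : ℚ) := by
    intro k hk1 hkj
    have hkp : k < p := by omega
    have hd : (p : ℚ) - (k : ℚ) ≠ 0 := by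
      have : (k:ℚ) < (p:ℚ) := by exact_mod_cast hkp
      linarith
    have hnat : (p - k) * Nat.choose (p - k - 1) (k - 1) = Nat.choose (p - k) k * k := by
      have h1 : p - k = (p - k - 1) + 1 := by omega
      have h2 : k = (k - 1) + 1 := by omega
      calc (p - k) * Nat.choose (p - k - 1) (k - 1)
          = ((p-k-1)+1) * Nat.choose (p-k-1) (k-1) := by rw [← h1]
        _ = Nat.choose ((p-k-1)+1) ((k-1)+1) * ((k-1)+1) := Nat.add_one_mul_choose_eq _ _
        _ = Nat.choose (p - k) k * k := by rw [← h1, ← h2]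
    have hq : ((p:ℚ) - k) * (Nat.choose (p - k - 1) (k - 1) : ℚ) = (Nat.choose (p - k) k : ℚ) * k := by
      have hc := congrArg (Nat.cast : ℕ → ℚ) hnat
      push_cast at hc
      rw [Nat.cast_sub (le_of_lt hkp)] at hc
      exact_mod_cast hc
    field_simp
    nlinarith [hq]
  have split : ∀ k ∈ Finset.range (j+1),
      ((-1 : ℚ) ^ k * ((p : ℚ) / ((p : ℚ) - (k : ℚ))) *
        (Nat.choose (p - k) k : ℚ) * (Nat.choose (p - 2 * k) (j - k) : ℚ))
      = (-1:ℚ)^k * ((p-k).choose k) * ((p - 2*k).choose (j-k))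
        + (if k = 0 then 0 else (-1:ℚ)^k * ((p-k-1).choose (k-1)) * ((p - 2*k).choose (j-k))) := by
    intro k hk
    have hk' : k ≤ j := by simpa [Nat.lt_succ_iff] using hk
    rcases Nat.eq_zero_or_pos k with h0 | h1
    · subst h0; simp [div_self hp0]
    · rw [if_neg (by omega)]
      have hte := term_eq k h1 hk'
      calc (-1 : ℚ) ^ k * ((p : ℚ) / ((p : ℚ) - (k : ℚ))) *
          (Nat.choose (p - k) k : ℚ) * (Nat.choose (p - 2 * k) (j - k) : ℚ)
          = (-1:ℚ)^k * (((p : ℚ) / ((p : ℚ) - (k : ℚ))) * (Nat.choose (p - k) k : ℚ)) * (Nat.choose (p - 2 * k) (j - k) : ℚ) := by ring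
        _ = (-1:ℚ)^k * ((Nat.choose (p - k) k : ℚ) + (Nat.choose (p - k - 1) (k - 1) : ℚ)) * (Nat.choose (p - 2 * k) (j - k) : ℚ) := by rw [hte]
        _ = _ := by ring
  rw [Finset.sum_congr rfl split, Finset.sum_add_distrib]
  have hT1 : ∑ k ∈ Finset.range (j+1), (-1:ℚ)^k * ((p-k).choose k) * ((p - 2*k).choose (j-k)) = 1 :=
    altT j p (by omega)
  have hT2 : ∑ k ∈ Finset.range (j+1),
      (if k = 0 then 0 else (-1:ℚ)^k * ((p-k-1).choose (k-1)) * ((p - 2*k).choose (j-k))) = -1 := by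
    rw [Finset.sum_range_succ']
    have hterm : ∀ m ∈ Finset.range j, (if m+1 = 0 then (0:ℚ) else (-1:ℚ)^(m+1) * ((p-(m+1)-1).choose ((m+1)-1)) * ((p - 2*(m+1)).choose (j-(m+1))))
        = -((-1:ℚ)^m * (((p-2)-m).choose m) * (((p-2) - 2*m).choose ((j-1)-m))) := by
      intro m hm
      rw [if_neg (Nat.succ_ne_zero _)]
      have e1 : p - (m+1) - 1 = (p-2) - m := by omega
      have e2 : (m+1) - 1 = m := by omega
      have e3 : p - 2*(m+1) = (p-2) - 2*m := by omega
      have e4 : j - (m+1) = (j-1) - m := by omega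
      rw [e1, e2, e3, e4, pow_succ]; ring
    rw [Finset.sum_congr rfl hterm, Finset.sum_neg_distrib]
    have hT := altT (j-1) (p-2) (by omega)
    have hj' : (j-1)+1 = j := by omega
    rw [hj'] at hT
    rw [hT]
    simp
  rw [hT1, hT2]
  ring
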